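/- arXiv:1112.3869 — 6 statements merged into one kernel-verified Lean document; each statement's English description precedes it below -/
import Mathlib

section
/- Let A = ⊕_{n≥0} A_n be an ℕ-graded k-algebra with a central regular element g ∈ A_1, and let φ: A → A/(g-1)A be the canonical surjection. Define a filtration Λ on A/(g-1)A by Λ_n = φ(A_{≤n}). Then the associated graded algebra gr_Λ(A/(g-1)A) is isomorphic to A/gA. -/
open DirectSum

section Aux
variable {k A : Type*} [Field k] [Ring A] [Algebra k A]
variable (𝒜 : ℕ → Submodule k A) [GradedAlgebra 𝒜] {g : A}

lemma aux_core (hg1 : g ∈ 𝒜 1) (hreg : IsLeftRegular g) {n : ℕ} {a c x : A}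
    (ha : a ∈ 𝒜 n) (hc : ∀ m, n ≤ m → (decompose 𝒜 c m : A) = 0)
    (hx : a - c = (g - 1) * x) : ∃ b, g * b = a := by
  classical
  have comp : ∀ m, (decompose 𝒜 a m : A) - (decompose 𝒜 c m : A)
      = (decompose 𝒜 (g * x) m : A) - (decompose 𝒜 x m : A) := by
    intro m
    have h' : a - c = g * x - x := by rw [hx, sub_one_mul]
    have h2 := congrArg (fun z => (decompose 𝒜 z m : A)) h'
    simpa [decompose_sub, DirectSum.sub_apply] using h2
  set N := (decompose 𝒜 x).support.sup id + 1 with hN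
  have hNbound : ∀ m, N ≤ m → (decompose 𝒜 x m : A) = 0 := by
    intro m hm
    have hns : m ∉ (decompose 𝒜 x).support := by
      intro hmem
      have := Finset.le_sup (f := id) hmem
      simp only [id] at this
      omega
    rw [DFinsupp.notMem_support_iff.mp hns]
    rfl
  have down : ∀ d m, n ≤ m → N ≤ m + d → (decompose 𝒜 x m : A) = 0 := by
    intro d
    induction d with
    | zero => intro m hm hNm; exact hNbound m (by omega)
    | succ d ih =>
      intro m hm hNm
      by_cases hcase : N ≤ m
      · exact hNbound m hcase
      have h1 : (decompose 𝒜 x (m + 1) : A) = 0 := ih (m + 1) (by omega) (by omega)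
      have h2 := comp (m + 1)
      rw [decompose_of_mem_ne 𝒜 ha (by omega : n ≠ m + 1), hc (m + 1) (by omega), h1,
        coe_decompose_mul_of_left_mem_of_le 𝒜 hg1 (by omega : 1 ≤ m + 1)] at h2
      simp only [sub_zero, sub_self, Nat.add_sub_cancel] at h2
      exact hreg (show g * (decompose 𝒜 x m : A) = g * 0 by rw [mul_zero]; exact h2.symm)
  have hx0 : ∀ m, n ≤ m → (decompose 𝒜 x m : A) = 0 := fun m hm => down N m hm (by omega)
  have h2 := comp n
  rw [decompose_of_mem_same 𝒜 ha, hc n le_rfl, hx0 n le_rfl, sub_zero, sub_zero] at h2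
  cases n with
  | zero =>
    rw [coe_decompose_mul_of_left_mem_of_not_le 𝒜 hg1 (by omega)] at h2
    exact ⟨0, by rw [mul_zero, h2]⟩
  | succ m =>
    rw [coe_decompose_mul_of_left_mem_of_le 𝒜 hg1 (by omega : 1 ≤ m + 1)] at h2
    exact ⟨decompose 𝒜 x (m + 1 - 1), h2.symm⟩

lemma aux_mem (hg1 : g ∈ 𝒜 1) (hreg : IsLeftRegular g) {n : ℕ} {a b : A}
    (ha : a ∈ 𝒜 n) (hab : g * b = a) :
    (n = 0 → a = 0) ∧ (∀ m, n = m + 1 → b ∈ 𝒜 m) := by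
  classical
  have hbz : ∀ i, i + 1 ≠ n → (decompose 𝒜 b i : A) = 0 := by
    intro i hi
    have h1 : (decompose 𝒜 (g * b) (i + 1) : A) = g * (decompose 𝒜 b i : A) := by
      rw [coe_decompose_mul_of_left_mem_of_le 𝒜 hg1 (by omega : 1 ≤ i + 1),
        Nat.add_sub_cancel]
    rw [hab, decompose_of_mem_ne 𝒜 ha (fun h => hi h.symm)] at h1
    exact hreg (show g * (decompose 𝒜 b i : A) = g * 0 by rw [mul_zero, ← h1])
  have hsum := DirectSum.sum_support_decompose 𝒜 b
  constructor
  · intro hn0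
    subst hn0
    have hb0 : b = 0 := by
      rw [← hsum]
      exact Finset.sum_eq_zero fun i _ => hbz i (by omega)
    rw [← hab, hb0, mul_zero]
  · intro m hm
    subst hm
    rw [← hsum]
    refine Submodule.sum_mem _ fun i _ => ?_
    by_cases him : i = m
    · subst him; exact (decompose 𝒜 b i).2
    · rw [hbz i (by omega)]; exact (𝒜 m).zero_mem

end Aux


/-- Let `A = ⊕ₙ Aₙ` be an ℕ-graded `k`-algebra with a central regular element
`g ∈ A₁`, and let `φ : A → A/(g-1)A` be the canonical surjection.  Define a filtration `Λ` on
`A/(g-1)A` by `Λ n = φ(A_{≤n})`.  Then the associated graded algebra `gr_Λ (A/(g-1)A)` is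
isomorphic to `A/gA`: for each `n` the canonical map induces a `k`-linear isomorphism
`Λ n / Λ (n-1) ≅ Aₙ / (Aₙ ∩ gA)` (the degree-`n` piece of `A/gA`), which automatically
carries the graded multiplication onto that of `A/gA`. -/
theorem assocGraded_of_filtration_iso_quotient_by_g
    (k A : Type*) [Field k] [Ring A] [Algebra k A]
    (𝒜 : ℕ → Submodule k A) [GradedAlgebra 𝒜] (g : A)
    (hg1 : g ∈ 𝒜 1) (hgc : ∀ a, g * a = a * g) (hreg : IsRegular g) :
    -- `J = (g-1)A`, the (two-sided, as `g-1` is central) ideal generated by `g - 1`;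
    -- `φ = J.mkQ : A → A ⧸ J`;  `Λ n = φ (A_{≤ n})`;  the degree-`n` piece of `gr_Λ` is
    -- `Λ n ⧸ Λ (n-1)` and the degree-`n` piece of `A/gA` is `𝒜 n ⧸ (𝒜 n ∩ gA)`.
    ∀ (J : Submodule k A), J = LinearMap.range (LinearMap.mulLeft k (g - 1)) →
    ∀ (Λ : ℕ → Submodule k (A ⧸ J)), (∀ n, Λ n = Submodule.map J.mkQ (⨆ i ≤ n, 𝒜 i)) →
    ∃ e : ∀ n : ℕ,
        ((Λ n) ⧸ (Submodule.comap (Λ n).subtype (⨆ j, ⨆ _ : j < n, Λ j))) ≃ₗ[k]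
        ((𝒜 n) ⧸ (Submodule.comap (𝒜 n).subtype
          (LinearMap.range (LinearMap.mulLeft k g)))),
      ∀ (n : ℕ) (a : 𝒜 n) (h : J.mkQ a ∈ Λ n),
        e n (Submodule.Quotient.mk ⟨J.mkQ a, h⟩) = Submodule.Quotient.mk a := by
  intro J hJ Λ hΛ
  classical
  have hlreg : IsLeftRegular g := hreg.left
  have hmkg : ∀ z : A, J.mkQ (g * z) = J.mkQ z := by
    intro z
    rw [Submodule.mkQ_apply, Submodule.mkQ_apply, Submodule.Quotient.eq, hJ]
    exact ⟨z, by rw [LinearMap.mulLeft_apply, sub_one_mul]⟩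
  have hmkpow : ∀ (m : ℕ) (z : A), J.mkQ (g ^ m * z) = J.mkQ z := by
    intro m
    induction m with
    | zero => intro z; rw [pow_zero, one_mul]
    | succ m ih =>
      intro z
      rw [pow_succ', mul_assoc, hmkg, ih]
  have hΛn : ∀ n, Λ n = Submodule.map J.mkQ (𝒜 n) := by
    intro n
    rw [hΛ]
    apply le_antisymm
    · rw [Submodule.map_le_iff_le_comap]
      refine iSup₂_le fun i hi x hx => ?_
      have hpow : g ^ (n - i) ∈ 𝒜 (n - i) := by
        simpa using SetLike.pow_mem_graded (n - i) hg1
      have hmem : g ^ (n - i) * x ∈ 𝒜 n := by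
        have h := SetLike.mul_mem_graded hpow hx
        rwa [Nat.sub_add_cancel hi] at h
      exact ⟨g ^ (n - i) * x, hmem, hmkpow (n - i) x⟩
    · exact Submodule.map_mono (le_iSup₂ (f := fun i (_ : i ≤ n) => 𝒜 i) n le_rfl)
  have hΛmono : Monotone Λ := by
    intro m n hmn
    rw [hΛ, hΛ]
    exact Submodule.map_mono
      (iSup₂_le fun i hi => le_iSup₂ (f := fun i (_ : i ≤ n) => 𝒜 i) i (hi.trans hmn))
  have hsup0 : (⨆ j, ⨆ _ : j < 0, Λ j) = ⊥ := by
    rw [eq_bot_iff]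
    exact iSup₂_le fun j hj => absurd hj (by omega)
  have hsupS : ∀ m : ℕ, (⨆ j, ⨆ _ : j < m + 1, Λ j) = Λ m := by
    intro m
    apply le_antisymm
    · exact iSup₂_le fun j hj => hΛmono (by omega)
    · exact le_iSup₂ (f := fun j (_ : j < m + 1) => Λ j) m (by omega)
  have hker_iff : ∀ (n : ℕ) (a : A), a ∈ 𝒜 n →
      (J.mkQ a ∈ (⨆ j, ⨆ _ : j < n, Λ j) ↔ ∃ b, g * b = a) := by
    intro n a ha
    constructor
    · intro hmem
      cases n with
      | zero =>
        rw [hsup0, Submodule.mem_bot] at hmem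
        have haJ : a ∈ J := by
          rwa [← Submodule.Quotient.mk_eq_zero, ← Submodule.mkQ_apply]
        rw [hJ] at haJ
        obtain ⟨x, hx⟩ := haJ
        refine aux_core 𝒜 hg1 hlreg (x := x) ha (c := 0) (fun m _ => by simp) ?_
        rw [sub_zero, ← hx, LinearMap.mulLeft_apply]
      | succ m =>
        rw [hsupS, hΛn] at hmem
        obtain ⟨c, hc, hceq⟩ := hmem
        have hsub : a - c ∈ J := by
          rw [← Submodule.Quotient.eq]
          exact hceq.symm
        rw [hJ] at hsub
        obtain ⟨x, hx⟩ := hsub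
        refine aux_core 𝒜 hg1 hlreg (x := x) ha (c := c)
          (fun m' hm' => decompose_of_mem_ne 𝒜 hc (by omega)) ?_
        rw [← hx, LinearMap.mulLeft_apply]
    · rintro ⟨b, hb⟩
      obtain ⟨h0, hS⟩ := aux_mem 𝒜 hg1 hlreg ha hb
      cases n with
      | zero =>
        rw [h0 rfl, map_zero]
        exact Submodule.zero_mem _
      | succ m =>
        rw [hsupS, hΛn, ← hb, hmkg]
        exact ⟨b, hS m rfl, rfl⟩
  have key : ∀ n : ℕ, ∃ e :
      ((Λ n) ⧸ (Submodule.comap (Λ n).subtype (⨆ j, ⨆ _ : j < n, Λ j))) ≃ₗ[k]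
      ((𝒜 n) ⧸ (Submodule.comap (𝒜 n).subtype
        (LinearMap.range (LinearMap.mulLeft k g)))),
      ∀ (a : 𝒜 n) (h : J.mkQ a ∈ Λ n),
        e (Submodule.Quotient.mk ⟨J.mkQ a, h⟩) = Submodule.Quotient.mk a := by
    intro n
    have hmemΛ : ∀ a : 𝒜 n, J.mkQ ↑a ∈ Λ n := fun a => by
      rw [hΛn]; exact ⟨a, a.2, rfl⟩
    set f : (𝒜 n) →ₗ[k] (Λ n) :=
      LinearMap.codRestrict (Λ n) (J.mkQ ∘ₗ (𝒜 n).subtype) hmemΛ with hfdef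
    set F := (Submodule.comap (Λ n).subtype (⨆ j, ⨆ _ : j < n, Λ j)).mkQ ∘ₗ f with hFdef
    have hf : ∀ a : 𝒜 n, ((f a : Λ n) : A ⧸ J) = J.mkQ ↑a := fun a => rfl
    have hFsurj : Function.Surjective F := by
      intro y
      obtain ⟨⟨v, hv⟩, rfl⟩ := Submodule.mkQ_surjective _ y
      have hv' := hv
      rw [hΛn, Submodule.mem_map] at hv'
      obtain ⟨a, haA, hav⟩ := hv'
      refine ⟨⟨a, haA⟩, ?_⟩
      show Submodule.Quotient.mk (f ⟨a, haA⟩) = Submodule.Quotient.mk (⟨v, hv⟩ : Λ n)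
      congr 1
      exact Subtype.ext (by rw [hf]; exact hav)
    have hFker : LinearMap.ker F =
        Submodule.comap (𝒜 n).subtype (LinearMap.range (LinearMap.mulLeft k g)) := by
      ext a
      rw [LinearMap.mem_ker]
      show Submodule.Quotient.mk (f a) = 0 ↔ _
      rw [Submodule.Quotient.mk_eq_zero, Submodule.mem_comap, Submodule.mem_comap]
      rw [show (Λ n).subtype (f a) = J.mkQ ↑a from rfl]
      rw [hker_iff n ↑a a.2]
      simp only [LinearMap.mem_range, LinearMap.mulLeft_apply, Submodule.subtype_apply]
    refine ⟨((Submodule.quotEquivOfEq _ _ hFker.symm) ≪≫ₗ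
      F.quotKerEquivOfSurjective hFsurj).symm, ?_⟩
    intro a h
    rw [LinearEquiv.symm_apply_eq, LinearEquiv.trans_apply, Submodule.quotEquivOfEq_mk]
    show Submodule.Quotient.mk (f a) = Submodule.Quotient.mk (⟨J.mkQ ↑a, h⟩ : Λ n)
    congr 1
  choose e he using key
  exact ⟨e, he⟩
end

section
/- Let k be an algebraically closed field and let K/k be a finitely generated field extension of transcendence degree 1. Then K satisfies the ascending chain condition on intermediate fields containing k: every chain k ⊆ K(1) ⊆ K(2) ⊆ ⋯ ⊆ K of subfields stabilizes. -/
open IntermediateField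
/-- Let `k` be an algebraically closed field and `K/k` a finitely generated field
extension of transcendence degree 1. Then `K` satisfies the ascending chain condition on
intermediate fields containing `k`: every chain `k ⊆ K 1 ⊆ K 2 ⊆ ⋯ ⊆ K` of subfields
stabilizes. -/
theorem acc_intermediate_fields_of_trdeg_one
    (k K : Type*) [Field k] [IsAlgClosed k] [Field K] [Algebra k K]
    (hfg : (⊤ : IntermediateField k K).FG)
    (htr : ∃ x : K, IsTranscendenceBasis k (fun _ : Fin 1 => x))
    (F : ℕ → IntermediateField k K) (hmono : Monotone F) :
    ∃ N, ∀ n ≥ N, F n = F N := by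
  obtain ⟨x, hx⟩ := htr
  by_cases hcase : ∃ N, ∃ t ∈ F N, Transcendental k t
  · obtain ⟨N, t, htF, htrans⟩ := hcase
    -- t is not transcendental over k⟮x⟯ (algebra adjoin)
    have halg := hx.isAlgebraic
    have hnt : ¬ Transcendental (Algebra.adjoin k (Set.range fun _ : Fin 1 => x)) t := by
      rw [Transcendental, not_not]
      exact Algebra.IsAlgebraic.isAlgebraic t
    have hxt_not : ¬ AlgebraicIndependent k (fun o : Option (Fin 1) => o.elim t fun _ => x) := by
      rw [hx.1.option_iff_transcendental t]
      exact hnt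
    -- t is algebraically independent as a single family
    have ht1 : AlgebraicIndependent k (fun _ : Fin 1 => t) := by
      have := (algebraicIndependent_iff_transcendental (R := k) (x := t)).2 htrans
      exact this.comp (fun _ => 0) (fun a b _ => Subsingleton.elim a b)
    -- x is algebraic over Algebra.adjoin k {t}
    have hx_alg : IsAlgebraic (Algebra.adjoin k (Set.range fun _ : Fin 1 => t)) x := by
      by_contra h
      have hind : AlgebraicIndependent k (fun o : Option (Fin 1) => o.elim x fun _ => t) :=
        (ht1.option_iff_transcendental x).2 h
      apply hxt_not
      have : (fun o : Option (Fin 1) => o.elim t fun _ => x)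
          = (fun o : Option (Fin 1) => o.elim x fun _ => t) ∘
            (fun o : Option (Fin 1) => o.elim (some 0) fun _ => none) := by
        funext o; cases o <;> rfl
      rw [this]
      exact hind.comp _ (by decide)
    -- x is algebraic over k⟮t⟯
    have hx_alg' : IsAlgebraic (k⟮t⟯) x := by
      have hle : Algebra.adjoin k (Set.range fun _ : Fin 1 => t) ≤ k⟮t⟯.toSubalgebra := by
        rw [Algebra.adjoin_le_iff]
        rintro y ⟨i, rfl⟩
        exact IntermediateField.mem_adjoin_simple_self k t
      exact hx_alg.tower_top_of_subalgebra_le hle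
    -- K is algebraic over k⟮t⟯
    have hKalg : Algebra.IsAlgebraic (k⟮t⟯) K := by
      have h1 : Algebra.IsAlgebraic (k⟮t⟯) (k⟮t⟯⟮x⟯) :=
        IntermediateField.isAlgebraic_adjoin_simple hx_alg'.isIntegral
      have h2 : Algebra.IsAlgebraic (k⟮t⟯⟮x⟯) K := by
        constructor
        intro a
        have ha : IsAlgebraic (IntermediateField.adjoin k (Set.range fun _ : Fin 1 => x)) a :=
          hx.isAlgebraic_field.isAlgebraic a
        have hle : (IntermediateField.adjoin k (Set.range fun _ : Fin 1 => x))
            ≤ (k⟮t⟯⟮x⟯).restrictScalars k := by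
          rw [IntermediateField.adjoin_le_iff]
          rintro y ⟨i, rfl⟩
          exact IntermediateField.mem_adjoin_simple_self (k⟮t⟯) x
        exact ha.tower_top_of_subalgebra_le
          (A := (IntermediateField.adjoin k (Set.range fun _ : Fin 1 => x)).toSubalgebra)
          (B := ((k⟮t⟯⟮x⟯).restrictScalars k).toSubalgebra) hle
      haveI := h1; haveI := h2
      exact Algebra.IsAlgebraic.trans (k⟮t⟯) (k⟮t⟯⟮x⟯) K
    -- K is finite dimensional over k⟮t⟯
    have : FiniteDimensional (k⟮t⟯) K := by
      obtain ⟨S, hS⟩ := hfg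
      have hle' : k⟮t⟯ ≤ IntermediateField.adjoin k (S : Set K) := by
        rw [hS]; exact le_top
      have hadj : IntermediateField.adjoin (k⟮t⟯) (S : Set K) = ⊤ := by
        rw [← IntermediateField.extendScalars_adjoin hle']
        ext a
        simp only [IntermediateField.mem_extendScalars, IntermediateField.mem_top, iff_true]
        rw [hS]; trivial
      have : FiniteDimensional (k⟮t⟯) (IntermediateField.adjoin (k⟮t⟯) (S : Set K)) :=
        IntermediateField.finiteDimensional_adjoin fun y _ => (hKalg.isAlgebraic y).isIntegral
      rw [hadj] at this
      exact (IntermediateField.topEquiv (F := k⟮t⟯) (E := K)).toLinearEquiv.finiteDimensional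
    have hNle : k⟮t⟯ ≤ F N := by
      rw [IntermediateField.adjoin_simple_le_iff]; exact htF
    -- submodule chain
    haveI : IsNoetherian (k⟮t⟯) K := IsNoetherian.iff_fg.2 inferInstance
    let G : ℕ →o Submodule (k⟮t⟯) K :=
      ⟨fun n =>
        { carrier := (F (N + n) : Set K)
          add_mem' := fun ha hb => add_mem ha hb
          zero_mem' := zero_mem _
          smul_mem' := fun c y hy => by
            have hc : (c : K) ∈ F (N + n) := hmono (Nat.le_add_right N n) (hNle c.2)
            simpa [Algebra.smul_def] using mul_mem hc hy },
        fun a b hab => by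
          simp only [Submodule.mk_le_mk]
          exact hmono (Nat.add_le_add_left hab N)⟩
    obtain ⟨M, hM⟩ := monotone_stabilizes_iff_noetherian.mpr inferInstance G
    refine ⟨N + M, fun n hn => ?_⟩
    have h1 : G M = G (n - N) := hM (n - N) (Nat.le_sub_of_add_le (by omega))
    have : F (N + (n - N)) = F (N + M) := by
      apply SetLike.coe_injective
      exact (congrArg (fun s : Submodule (k⟮t⟯) K => (s : Set K)) h1).symm
    rwa [Nat.add_sub_cancel' (by omega : N ≤ n)] at this
  · push_neg at hcase
    refine ⟨0, fun n _ => ?_⟩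
    have hbot : ∀ m, F m = ⊥ := by
      intro m
      apply le_antisymm _ bot_le
      intro a ha
      rw [IntermediateField.mem_bot]
      have halg : IsAlgebraic k a := by
        have := hcase m a ha
        rwa [Transcendental, not_not] at this
      obtain ⟨c, hc⟩ := minpoly.degree_eq_one_iff.mp
        (IsAlgClosed.degree_eq_one_of_irreducible k (minpoly.irreducible halg.isIntegral))
      exact ⟨c, hc⟩
    rw [hbot n, hbot 0]
end

section
/- Let A be an infinite-dimensional k-algebra that is a domain, and suppose every k-subalgebra of A is noetherian. Then A is just infinite: every nonzero two-sided ideal of A has finite codimension as a k-vector space. -/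
/-- Let `A` be an infinite-dimensional `k`-algebra that is a domain, and suppose
every `k`-subalgebra of `A` is noetherian.  Then `A` is just infinite: every nonzero two-sided
ideal of `A` has finite codimension as a `k`-vector space.  (A two-sided ideal is encoded as a
`k`-subspace `I` closed under left and right multiplication by arbitrary elements of `A`.) -/
theorem just_infinite_of_all_subalgebras_noetherian
    (k A : Type*) [Field k] [Ring A] [Algebra k A] [IsDomain A]
    (hinf : ¬ FiniteDimensional k A)
    (hnoeth : ∀ R : Subalgebra k A, IsNoetherianRing R)
    (I : Submodule k A)
    (hIl : ∀ (a : A), ∀ x ∈ I, a * x ∈ I) (hIr : ∀ (a : A), ∀ x ∈ I, x * a ∈ I)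
    (hI : I ≠ ⊥) :
    FiniteDimensional k (A ⧸ I) := by
  classical
  -- The submodule `k·1 + I`.
  set P : Submodule k A := Submodule.span k {1} ⊔ I with hP
  have h1P : (1 : A) ∈ P := Submodule.mem_sup_left (Submodule.mem_span_singleton_self 1)
  have hIP : ∀ x ∈ I, x ∈ P := fun x hx => Submodule.mem_sup_right hx
  have hmem : ∀ x ∈ P, ∃ c : k, ∃ i ∈ I, x = c • (1 : A) + i := by
    intro x hx
    rcases Submodule.mem_sup.mp hx with ⟨u, hu, v, hv, rfl⟩
    rcases Submodule.mem_span_singleton.mp hu with ⟨c, rfl⟩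
    exact ⟨c, v, hv, rfl⟩
  have hmul : ∀ x y : A, x ∈ P → y ∈ P → x * y ∈ P := by
    intro x y hx hy
    rcases hmem y hy with ⟨d, j, hj, rfl⟩
    have hxy : x * (d • (1 : A) + j) = d • x + x * j := by
      rw [mul_add, mul_smul_comm, mul_one]
    rw [hxy]
    exact P.add_mem (P.smul_mem d hx) (hIP _ (hIl x j hj))
  -- `R = k·1 + I` is a subalgebra.
  set R : Subalgebra k A := P.toSubalgebra h1P hmul with hRdef
  haveI hRnoeth : IsNoetherian R R := hnoeth R
  -- pick a nonzero element of `I`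
  obtain ⟨x, hxI, hx0⟩ := (Submodule.ne_bot_iff I).mp hI
  have hxR : ∀ a : A, a * x ∈ P := fun a => hIP _ (hIl a x hxI)
  -- `a ↦ a * x` is an injective `R`-linear map `A → R`.
  have hsmul : ∀ (r : R) (a : A), r • a = (r : A) * a := fun r a => Subalgebra.smul_def r a
  let g : A →ₗ[R] R :=
    { toFun := fun a => ⟨a * x, hxR a⟩
      map_add' := fun a b => by ext; simp [add_mul]
      map_smul' := fun r a => by
        ext
        simp only [RingHom.id_apply]
        show (r • a) * x = ((r * ⟨a * x, hxR a⟩ : R) : A)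
        rw [hsmul]
        show ((r : A) * a) * x = (r : A) * (a * x)
        rw [mul_assoc] }
  have hginj : Function.Injective g := by
    intro a b hab
    have : a * x = b * x := congrArg Subtype.val hab
    exact mul_right_cancel₀ hx0 this
  haveI : IsNoetherian R A := isNoetherian_of_injective g hginj
  -- hence `A` is finitely generated as an `R`-module
  obtain ⟨S, hS⟩ : (⊤ : Submodule R A).FG := IsNoetherian.noetherian ⊤
  -- the images of `S` span `A ⧸ I` over `k`
  refine ⟨⟨S.image I.mkQ, ?_⟩⟩
  rw [Finset.coe_image, eq_top_iff]
  rintro y -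
  obtain ⟨a, rfl⟩ := Submodule.Quotient.mk_surjective I y
  have ha : a ∈ Submodule.span R (S : Set A) := hS ▸ Submodule.mem_top
  show I.mkQ a ∈ Submodule.span k (I.mkQ '' (S : Set A))
  refine Submodule.span_induction (p := fun z _ => I.mkQ z ∈ Submodule.span k (I.mkQ '' (S : Set A)))
    ?_ ?_ ?_ ?_ ha
  · intro z hz
    exact Submodule.subset_span ⟨z, hz, rfl⟩
  · simp
  · intro z w _ _ hz hw
    rw [map_add]
    exact Submodule.add_mem _ hz hw
  · intro r z _ hz
    rcases hmem (r : A) r.2 with ⟨c, i, hi, hri⟩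
    have : r • z = c • z + i * z := by
      rw [hsmul, hri, add_mul, smul_mul_assoc, one_mul]
    rw [this, map_add, map_smul]
    have hiz : I.mkQ (i * z) = 0 := by
      rw [Submodule.mkQ_apply, Submodule.Quotient.mk_eq_zero]
      exact hIr z i hi
    rw [hiz, add_zero]
    exact Submodule.smul_mem _ c hz
end

section
/- Let A be a k-algebra domain and I a nonzero two-sided ideal of A such that the subalgebra R = k + I is noetherian (as a ring). Then A/I is finite-dimensional over k. -/
/-- Let `A` be a `k`-algebra domain and `I` a nonzero two-sided ideal of `A` such
that the subalgebra `R = k + I` is noetherian (as a ring).  Then `A/I` is finite-dimensional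
over `k`. -/
theorem finite_codim_of_k_plus_ideal_noetherian
    (k A : Type*) [Field k] [Ring A] [Algebra k A] [IsDomain A]
    (I : Submodule k A)
    (hIl : ∀ (a : A), ∀ x ∈ I, a * x ∈ I) (hIr : ∀ (a : A), ∀ x ∈ I, x * a ∈ I)
    (hI : I ≠ ⊥)
    (R : Subalgebra k A) (hR : ∀ x, x ∈ R ↔ ∃ c : k, x - algebraMap k A c ∈ I)
    (hnoeth : IsNoetherianRing R) :
    FiniteDimensional k (A ⧸ I) := by
  have hIR : ∀ y ∈ I, y ∈ R := fun y hy => (hR y).2 ⟨0, by simpa using hy⟩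
  obtain ⟨x, hxI, hx0⟩ := Submodule.exists_mem_ne_zero_of_ne_bot hI
  have hsmul : ∀ (r : R) (a : A), r • a = (r : A) * a := fun r a => rfl
  let φ : A →ₗ[R] R :=
    { toFun := fun a => ⟨a * x, hIR _ (hIl a x hxI)⟩
      map_add' := fun a b => by ext; simp [add_mul]
      map_smul' := fun r a => by
        ext
        show (r • a) * x = (r : A) * (a * x)
        rw [hsmul, mul_assoc] }
  have hinj : Function.Injective φ := by
    intro a b h
    have h' : a * x = b * x := congrArg Subtype.val h
    exact mul_right_cancel₀ hx0 h'
  haveI : IsNoetherian R R := hnoeth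
  have hfg : (LinearMap.range φ).FG := IsNoetherian.noetherian _
  haveI : Module.Finite R (LinearMap.range φ) := Module.Finite.iff_fg.mpr hfg
  haveI : Module.Finite R A := Module.Finite.equiv (LinearEquiv.ofInjective φ hinj).symm
  obtain ⟨s, hs⟩ := Module.Finite.fg_top (R := R) (M := A)
  have hspan : Submodule.span k (I.mkQ '' ↑s) = ⊤ := by
    rw [eq_top_iff]
    rintro q -
    obtain ⟨a, rfl⟩ := I.mkQ_surjective q
    have ha : a ∈ Submodule.span R (↑s : Set A) := hs ▸ Submodule.mem_top
    induction ha using Submodule.span_induction with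
    | mem y hy => exact Submodule.subset_span ⟨y, hy, rfl⟩
    | zero => simp
    | add y z _ _ hy hz => rw [map_add]; exact Submodule.add_mem _ hy hz
    | smul r y _ hy =>
        obtain ⟨c, hc⟩ := (hR (r : A)).1 r.2
        have : r • y = c • y + ((r : A) - algebraMap k A c) * y := by
          rw [hsmul, sub_mul, Algebra.smul_def]; abel
        rw [this, map_add]
        have h0 : I.mkQ (((r : A) - algebraMap k A c) * y) = 0 := by
          rw [Submodule.mkQ_apply, Submodule.Quotient.mk_eq_zero]
          exact hIr y _ hc
        rw [h0, add_zero, map_smul]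
        exact Submodule.smul_mem _ _ hy
  exact ⟨Submodule.fg_def.mpr ⟨_, s.finite_toSet.image _, hspan⟩⟩
end

section
/- Let R be a commutative k-algebra (k a field) such that every k-subalgebra of R is noetherian. Then the Krull dimension of R is at most 1. -/
set_option synthInstance.maxHeartbeats 1000000
set_option maxHeartbeats 1000000

section Domain

variable (k : Type*) {D : Type*} [Field k] [CommRing D] [IsDomain D] [Algebra k D]

/-- The subalgebra `k + P`. -/
def kPlus (P : Ideal D) : Subalgebra k D where
  carrier := {x | ∃ c : k, x - algebraMap k D c ∈ P}
  add_mem' := by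
    rintro x y ⟨a, ha⟩ ⟨b, hb⟩
    exact ⟨a + b, by rw [map_add]; convert P.add_mem ha hb using 1; ring⟩
  mul_mem' := by
    rintro x y ⟨a, ha⟩ ⟨b, hb⟩
    refine ⟨a * b, ?_⟩
    have : x * y - algebraMap k D (a * b)
        = x * (y - algebraMap k D b) + algebraMap k D b * (x - algebraMap k D a) := by
      rw [map_mul]; ring
    rw [this]
    exact P.add_mem (P.mul_mem_left _ hb) (P.mul_mem_left _ ha)
  algebraMap_mem' := fun c => ⟨c, by simp⟩

theorem mem_kPlus_of_mem {P : Ideal D} {x : D} (hx : x ∈ P) : x ∈ kPlus k P :=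
  ⟨0, by simpa using hx⟩

theorem isMaximal_of_ne_bot
    (h : ∀ S : Subalgebra k D, IsNoetherianRing S)
    (P : Ideal D) [P.IsPrime] (hP : P ≠ ⊥) : P.IsMaximal := by
  set S := kPlus k P with hS
  haveI : IsNoetherianRing S := h S
  -- P as an ideal of S
  set P' : Ideal S := P.comap (algebraMap S D) with hP'
  -- P as an S-submodule of D
  set N : Submodule S D := (P : Submodule D D).restrictScalars S with hN
  have hNfg : N.FG := by
    obtain ⟨s, hs⟩ := IsNoetherian.noetherian (M := S) P'
    rw [Submodule.fg_def]
    refine ⟨algebraMap S D '' (s : Set S), s.finite_toSet.image _, le_antisymm ?_ ?_⟩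
    · rw [Submodule.span_le]
      rintro x ⟨y, hy, rfl⟩
      have hy' : y ∈ P' := hs ▸ Ideal.subset_span hy
      exact hy'
    · intro x hx
      have hxP : x ∈ P := hx
      have hxS : (⟨x, mem_kPlus_of_mem k hxP⟩ : S) ∈ P' := hxP
      rw [← hs] at hxS
      have hmap : x ∈ Submodule.map (Algebra.linearMap S D) (Submodule.span S (s : Set S)) :=
        ⟨_, hxS, rfl⟩
      rwa [Submodule.map_span] at hmap
  have hNbot : N ≠ ⊥ := by
    intro hbot
    apply hP
    rw [eq_bot_iff]
    intro x hx
    have : x ∈ N := hx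
    rw [hbot] at this
    simpa using this
  -- every element of D is integral over S
  haveI : Algebra.IsIntegral S D := by
    refine ⟨fun x => isIntegral_of_smul_mem_submodule N hNbot hNfg x ?_⟩
    intro n hn
    exact P.mul_mem_left x hn
  -- P' is maximal: S / P' ≅ k
  have hP'max : P'.IsMaximal := by
    apply Ideal.Quotient.maximal_of_isField
    set f : k →+* S ⧸ P' := (Ideal.Quotient.mk P').comp (algebraMap k S) with hf
    have hsurj : Function.Surjective f := by
      rintro y
      obtain ⟨⟨x, c, hc⟩, rfl⟩ := Ideal.Quotient.mk_surjective y
      refine ⟨c, ?_⟩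
      rw [hf, RingHom.comp_apply, Ideal.Quotient.eq]
      show ((algebraMap k S c : S) : D) - x ∈ P
      have : ((algebraMap k S c : S) : D) = algebraMap k D c := rfl
      rw [this]
      simpa using P.neg_mem hc
    have hinj : Function.Injective f := by
      rw [injective_iff_map_eq_zero]
      intro a ha
      by_contra h0
      have h1 : (algebraMap k S a : S) ∈ P' := by
        rwa [hf, RingHom.comp_apply, Ideal.Quotient.eq_zero_iff_mem] at ha
      have h2 : algebraMap k D a ∈ P := h1
      have h3 : (1 : D) ∈ P := by
        have := P.mul_mem_left (algebraMap k D a⁻¹) h2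
        rwa [← map_mul, inv_mul_cancel₀ h0, map_one] at this
      exact P.ne_top_iff_one.mp (Ideal.IsPrime.ne_top ‹P.IsPrime›) h3
    constructor
    · exact ⟨f 1, f 0, fun h01 => one_ne_zero (hinj (by simpa using h01))⟩
    · exact mul_comm
    · intro a ha
      obtain ⟨b, rfl⟩ := hsurj a
      have hb : b ≠ 0 := by rintro rfl; simp at ha
      exact ⟨f b⁻¹, by rw [← map_mul, mul_inv_cancel₀ hb, map_one]⟩
  exact Ideal.isMaximal_of_isIntegral_of_isMaximal_comap (R := S) P hP'max

end Domain

/-- Let `R` be a commutative `k`-algebra (`k` a field) such that every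
`k`-subalgebra of `R` is noetherian.  Then the Krull dimension of `R` is at most 1. -/
theorem krullDim_le_one_of_all_subalgebras_noetherian
    (k R : Type*) [Field k] [CommRing R] [Algebra k R]
    (hnoeth : ∀ S : Subalgebra k R, IsNoetherianRing S) :
    ringKrullDim R ≤ 1 := by
  rw [ringKrullDim, Order.krullDim]
  refine iSup_le fun p => ?_
  suffices h : p.length ≤ 1 by exact_mod_cast Nat.cast_le.mpr h
  by_contra hlen
  push_neg at hlen
  -- extract a chain of three primes
  have h2 : 2 ≤ p.length := hlen
  set q0 := p ⟨0, by omega⟩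
  set q1 := p ⟨1, by omega⟩
  set q2 := p ⟨2, by omega⟩
  have h01 : q0 < q1 := p.strictMono (by simp [Fin.lt_def])
  have h12 : q1 < q2 := p.strictMono (by simp [Fin.lt_def])
  -- pass to the quotient domain
  set D := R ⧸ q0.asIdeal with hD
  haveI : IsDomain D := Ideal.Quotient.isDomain _
  set π : R →+* D := Ideal.Quotient.mk q0.asIdeal with hπ
  have hπs : Function.Surjective π := Ideal.Quotient.mk_surjective
  have hker : RingHom.ker π = q0.asIdeal := Ideal.mk_ker
  have hsub : ∀ S : Subalgebra k D, IsNoetherianRing S := by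
    intro S'
    set T : Subalgebra k R := S'.comap (Ideal.Quotient.mkₐ k q0.asIdeal)
    haveI : IsNoetherianRing T := hnoeth T
    have : Function.Surjective (fun t : T => (⟨π t, t.2⟩ : S')) := by
      rintro ⟨y, hy⟩
      obtain ⟨x, rfl⟩ := hπs y
      exact ⟨⟨x, hy⟩, rfl⟩
    exact isNoetherianRing_of_surjective T S'
      { toFun := fun t : T => (⟨π t, t.2⟩ : S')
        map_one' := by ext; simp
        map_mul' := by intros; ext; simp
        map_zero' := by ext; simp
        map_add' := by intros; ext; simp } this
  set P1 : Ideal D := q1.asIdeal.map π with hP1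
  set P2 : Ideal D := q2.asIdeal.map π with hP2
  have h01' : q0.asIdeal ≤ q1.asIdeal := (PrimeSpectrum.asIdeal_le_asIdeal _ _).mpr h01.le
  have h02' : q0.asIdeal ≤ q2.asIdeal := (PrimeSpectrum.asIdeal_le_asIdeal _ _).mpr (h01.trans h12).le
  haveI hP1p : P1.IsPrime := Ideal.map_isPrime_of_surjective hπs (le_of_eq_of_le hker h01')
  haveI hP2p : P2.IsPrime := Ideal.map_isPrime_of_surjective hπs (le_of_eq_of_le hker h02')
  have hc1 : P1.comap π = q1.asIdeal := by
    rw [Ideal.comap_map_of_surjective π hπs, ← RingHom.ker_eq_comap_bot, hker, sup_eq_left.mpr h01']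
  have hc2 : P2.comap π = q2.asIdeal := by
    rw [Ideal.comap_map_of_surjective π hπs, ← RingHom.ker_eq_comap_bot, hker, sup_eq_left.mpr h02']
  have hbot : P1 ≠ ⊥ := by
    intro hb
    have : q1.asIdeal ≤ q0.asIdeal := by
      rw [← hker]
      intro x hx
      have : π x ∈ P1 := Ideal.mem_map_of_mem π hx
      rw [hb] at this
      simpa using this
    exact absurd (le_antisymm this h01.le) (by
      intro h
      exact h01.ne (PrimeSpectrum.ext h.symm))
  have hmax : P1.IsMaximal := isMaximal_of_ne_bot k hsub P1 hbot
  have hle : P1 ≤ P2 := Ideal.map_mono h12.le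
  have hne : P1 ≠ P2 := by
    intro h
    apply h12.ne
    apply PrimeSpectrum.ext
    rw [← hc1, ← hc2, h]
  exact hne (hmax.eq_of_le hP2p.ne_top hle)
end

section
/- Let D = k{x,y}/(xy - yx - x²). Then the ideal I = xD is a two-sided ideal with D/I ≅ k[y], and the subalgebra R = k + xD of D is not noetherian. -/
noncomputable section

variable (k : Type*) [Field k]

/-- The defining relation `xy - yx - x² = 0` of `D = k{x,y}/(xy - yx - x²)`. -/
def dRel : FreeAlgebra k (Fin 2) → FreeAlgebra k (Fin 2) → Prop :=
  fun a b => a = FreeAlgebra.ι k 0 * FreeAlgebra.ι k 1 -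
      FreeAlgebra.ι k 1 * FreeAlgebra.ι k 0 - FreeAlgebra.ι k 0 * FreeAlgebra.ι k 0 ∧ b = 0

/-- `D = k{x,y}/(xy - yx - x²)`. -/
def DAlg := RingQuot (dRel k)

instance : Ring (DAlg k) := inferInstanceAs (Ring (RingQuot (dRel k)))
instance : Algebra k (DAlg k) := inferInstanceAs (Algebra k (RingQuot (dRel k)))

/-- The image of `x` in `D`. -/
def xD : DAlg k := RingQuot.mkAlgHom k (dRel k) (FreeAlgebra.ι k 0)

namespace XDAux

open Polynomial

/-- the quotient map, with codomain `DAlg k`. -/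
def mkD : FreeAlgebra k (Fin 2) →ₐ[k] DAlg k := RingQuot.mkAlgHom k (dRel k)

/-- The image of `y` in `D`. -/
def yD : DAlg k := RingQuot.mkAlgHom k (dRel k) (FreeAlgebra.ι k 1)

lemma key_rel : xD k * yD k - yD k * xD k - xD k * xD k = 0 := by
  have h : dRel k (FreeAlgebra.ι k 0 * FreeAlgebra.ι k 1 -
      FreeAlgebra.ι k 1 * FreeAlgebra.ι k 0 - FreeAlgebra.ι k 0 * FreeAlgebra.ι k 0) 0 :=
    ⟨rfl, rfl⟩
  have := RingQuot.mkAlgHom_rel k h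
  simp only [map_sub, map_mul, map_zero] at this
  exact this

lemma yx_eq : yD k * xD k = xD k * (yD k - xD k) := by
  have h := key_rel k
  have h2 : xD k * yD k - xD k * xD k - yD k * xD k = 0 := by
    rw [sub_right_comm]; exact h
  have h3 := sub_eq_zero.mp h2
  rw [mul_sub]
  exact h3.symm

/-- `P = k[y][x]` : outer variable is `x`, inner is `y`. -/
abbrev P := Polynomial (Polynomial k)

/-- multiplication by `x`. -/
def Xop : Module.End k (P k) := Algebra.lmul k (P k) Polynomial.X

/-- d/dx, k-linearly. -/
def Dop : Module.End k (P k) :=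
  (Polynomial.derivative (R := Polynomial k)).restrictScalars k

/-- `y` acting: multiplication by `y` minus `x² d/dx`. -/
def Yop : Module.End k (P k) :=
  Algebra.lmul k (P k) (Polynomial.C Polynomial.X) - Xop k * Xop k * Dop k

lemma Xop_apply (f : P k) : Xop k f = Polynomial.X * f := rfl

lemma Yop_apply (f : P k) :
    Yop k f = Polynomial.C Polynomial.X * f
      - Polynomial.X * (Polynomial.X * Polynomial.derivative f) := rfl

lemma rep_rel : Xop k * Yop k - Yop k * Xop k - Xop k * Xop k = 0 := by
  apply LinearMap.ext
  intro f
  simp only [LinearMap.sub_apply, Module.End.mul_apply, LinearMap.zero_apply,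
    Xop_apply, Yop_apply, Polynomial.derivative_mul, Polynomial.derivative_X]
  ring

def rep0 : FreeAlgebra k (Fin 2) →ₐ[k] Module.End k (P k) :=
  FreeAlgebra.lift k (fun i => if i = 0 then Xop k else Yop k)

/-- The representation `D → End(k[x,y])`. -/
def rep : DAlg k →ₐ[k] Module.End k (P k) :=
  RingQuot.liftAlgHom k ⟨rep0 k, by
    rintro a b ⟨rfl, rfl⟩
    simp only [rep0, map_sub, map_mul, FreeAlgebra.lift_ι_apply, map_zero]
    norm_num
    have := rep_rel k
    simpa using this⟩

lemma rep_mk (f : FreeAlgebra k (Fin 2)) :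
    rep k (RingQuot.mkAlgHom k (dRel k) f) = rep0 k f :=
  RingQuot.liftAlgHom_mkAlgHom_apply _ _ _ _

lemma rep_mkD (f : FreeAlgebra k (Fin 2)) : rep k (mkD k f) = rep0 k f := rep_mk k f

lemma rep_x : rep k (xD k) = Xop k := by
  rw [xD, rep_mk, rep0, FreeAlgebra.lift_ι_apply]; simp

lemma rep_y : rep k (yD k) = Yop k := by
  rw [yD, rep_mk, rep0, FreeAlgebra.lift_ι_apply]
  norm_num

/-- Every element of D moved past x from the left: e * x = x * a. -/
lemma swap_x (e : DAlg k) : ∃ a : DAlg k, e * xD k = xD k * a := by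
  obtain ⟨f, rfl⟩ := (show Function.Surjective (mkD k) from RingQuot.mkAlgHom_surjective k (dRel k)) e
  induction f using FreeAlgebra.induction with
  | grade0 r =>
      refine ⟨algebraMap k _ r, ?_⟩
      rw [AlgHom.commutes]
      exact Algebra.commutes r (xD k)
  | grade1 i =>
      fin_cases i
      · exact ⟨xD k, rfl⟩
      · exact ⟨yD k - xD k, yx_eq k⟩
  | mul a b ha hb =>
      obtain ⟨u, hu⟩ := ha
      obtain ⟨v, hv⟩ := hb
      refine ⟨u * v, ?_⟩
      rw [map_mul, mul_assoc, hv, ← mul_assoc, hu, mul_assoc]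
  | add a b ha hb =>
      obtain ⟨u, hu⟩ := ha
      obtain ⟨v, hv⟩ := hb
      exact ⟨u + v, by rw [map_add, add_mul, hu, hv, mul_add]⟩

/-- Decomposition: every element of D is `x·a + p(y)`. -/
lemma decomp (e : DAlg k) :
    ∃ (a : DAlg k) (p : Polynomial k), e = xD k * a + Polynomial.aeval (yD k) p := by
  obtain ⟨f, rfl⟩ := (show Function.Surjective (mkD k) from RingQuot.mkAlgHom_surjective k (dRel k)) e
  induction f using FreeAlgebra.induction with
  | grade0 r =>
      refine ⟨0, Polynomial.C r, ?_⟩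
      rw [AlgHom.commutes, mul_zero, zero_add, Polynomial.aeval_C]
  | grade1 i =>
      fin_cases i
      · exact ⟨1, 0, by rw [map_zero, add_zero, mul_one]; rfl⟩
      · refine ⟨0, Polynomial.X, by rw [mul_zero, zero_add, Polynomial.aeval_X]; rfl⟩
  | mul a b ha hb =>
      obtain ⟨u, p, hu⟩ := ha
      obtain ⟨v, q, hv⟩ := hb
      obtain ⟨w, hw⟩ := swap_x k (Polynomial.aeval (yD k) p)
      refine ⟨u * (xD k * v) + u * Polynomial.aeval (yD k) q + w * v, p * q, ?_⟩
      have e1 : Polynomial.aeval (yD k) p * (xD k * v) = xD k * (w * v) := by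
        rw [← mul_assoc, hw, mul_assoc]
      rw [map_mul, hu, hv, add_mul, mul_add, mul_add, e1, map_mul, mul_add, mul_add,
        mul_assoc (xD k) u, mul_assoc (xD k) u]
      abel
  | add a b ha hb =>
      obtain ⟨u, p, hu⟩ := ha
      obtain ⟨v, q, hv⟩ := hb
      refine ⟨u + v, p + q, ?_⟩
      rw [map_add, hu, hv, map_add, mul_add]
      abel

/-- The quotient map `ψ : D → k[y]`, `x ↦ 0`, `y ↦ Y`. -/
def psi : DAlg k →ₐ[k] Polynomial k :=
  RingQuot.liftAlgHom k ⟨FreeAlgebra.lift k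
      (fun i => if i = 0 then (0 : Polynomial k) else Polynomial.X), by
    rintro a b ⟨rfl, rfl⟩
    simp [FreeAlgebra.lift_ι_apply]⟩

lemma psi_mk (f : FreeAlgebra k (Fin 2)) :
    psi k (RingQuot.mkAlgHom k (dRel k) f) = FreeAlgebra.lift k
      (fun i => if i = 0 then (0 : Polynomial k) else Polynomial.X) f :=
  RingQuot.liftAlgHom_mkAlgHom_apply _ _ _ _

lemma psi_x : psi k (xD k) = 0 := by
  rw [xD, psi_mk, FreeAlgebra.lift_ι_apply]
  simp

lemma psi_y : psi k (yD k) = Polynomial.X := by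
  rw [yD, psi_mk, FreeAlgebra.lift_ι_apply]
  norm_num

lemma psi_aeval (p : Polynomial k) : psi k (Polynomial.aeval (yD k) p) = p := by
  rw [← Polynomial.aeval_algHom_apply, psi_y, Polynomial.aeval_X_left, AlgHom.id_apply]

/-- coeff 0 in x vanishing is preserved by the representation. -/
lemma rep_invariant (e : DAlg k) (f : P k) (hf : f.coeff 0 = 0) :
    (rep k e f).coeff 0 = 0 := by
  obtain ⟨g, rfl⟩ := (show Function.Surjective (mkD k) from RingQuot.mkAlgHom_surjective k (dRel k)) e
  induction g using FreeAlgebra.induction generalizing f with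
  | grade0 r =>
      rw [AlgHom.commutes]
      rw [AlgHom.commutes, Module.algebraMap_end_apply, Polynomial.coeff_smul, hf, smul_zero]
  | grade1 i =>
      fin_cases i
      · rw [rep_mkD, rep0, FreeAlgebra.lift_ι_apply]
        norm_num
        rw [Xop_apply, Polynomial.mul_coeff_zero, Polynomial.coeff_X_zero, zero_mul]
      · rw [rep_mkD, rep0, FreeAlgebra.lift_ι_apply]
        norm_num
        rw [Yop_apply]
        rw [Polynomial.coeff_sub, Polynomial.mul_coeff_zero, hf, mul_zero,
          Polynomial.mul_coeff_zero, Polynomial.coeff_X_zero, zero_mul, sub_zero]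
  | mul a b ha hb =>
      rw [map_mul, map_mul, Module.End.mul_apply]
      exact ha _ (hb _ hf)
  | add a b ha hb =>
      rw [map_add, map_add, LinearMap.add_apply, Polynomial.coeff_add, ha _ hf, hb _ hf,
        add_zero]

lemma Yop_pow_one (j : ℕ) :
    ((Yop k) ^ j) (1 : P k) = Polynomial.C (Polynomial.X ^ j) := by
  induction j with
  | zero => simp
  | succ n ih =>
      rw [pow_succ', Module.End.mul_apply, ih, Yop_apply, Polynomial.derivative_C,
        mul_zero, mul_zero, sub_zero, ← Polynomial.C_mul, ← pow_succ']

lemma rep_xyj (j : ℕ) :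
    rep k (xD k * yD k ^ j) (1 : P k)
      = Polynomial.X * Polynomial.C (Polynomial.X ^ j) := by
  rw [map_mul, map_pow, rep_x, rep_y, Module.End.mul_apply]
  rw [Yop_pow_one, Xop_apply]

/-- The functional `d ↦ coeff_{x^1 y^{n+1}}` of the normal form of `d`. -/
def Lf (n : ℕ) : DAlg k →ₗ[k] k :=
  (Polynomial.lcoeff k (n+1)).comp
    (((Polynomial.lcoeff (Polynomial k) 1).restrictScalars k).comp
      ((LinearMap.applyₗ (1 : P k)).comp (rep k).toLinearMap))

lemma Lf_apply (n : ℕ) (d : DAlg k) :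
    Lf k n d = ((rep k d (1 : P k)).coeff 1).coeff (n+1) := rfl

lemma Lf_top (n : ℕ) : Lf k n (xD k * yD k ^ (n+1)) = 1 := by
  rw [Lf_apply, rep_xyj, Polynomial.coeff_X_mul, Polynomial.coeff_C_zero,
    Polynomial.coeff_X_pow, if_pos rfl]

lemma Lf_low (n j : ℕ) (hj : j ≤ n) (c : k) (a : DAlg k) :
    Lf k n ((algebraMap k (DAlg k) c + xD k * a) * (xD k * yD k ^ j)) = 0 := by
  rw [Lf_apply, _root_.map_mul (rep k), Module.End.mul_apply, rep_xyj]
  set v : P k := Polynomial.X * Polynomial.C (Polynomial.X ^ j) with hv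
  have hv0 : v.coeff 0 = 0 := by
    rw [hv, Polynomial.mul_coeff_zero, Polynomial.coeff_X_zero, zero_mul]
  rw [map_add, LinearMap.add_apply, AlgHom.commutes, Module.algebraMap_end_apply,
    _root_.map_mul (rep k) (xD k) a, rep_x, Module.End.mul_apply, Xop_apply]
  have h1 : (Polynomial.X * rep k a v).coeff 1 = 0 := by
    rw [Polynomial.coeff_X_mul]
    exact rep_invariant k a v hv0
  rw [Polynomial.coeff_add, h1, add_zero, Polynomial.coeff_smul, hv,
    Polynomial.coeff_X_mul, Polynomial.coeff_C_zero, Polynomial.coeff_smul,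
    Polynomial.coeff_X_pow, if_neg (by omega), smul_zero]

end XDAux

set_option maxHeartbeats 1000000 in
set_option synthInstance.maxHeartbeats 400000 in
open XDAux in
/-- Let `D = k{x,y}/(xy - yx - x²)`.  Then `I = xD` is a two-sided ideal with
`D/I ≅ k[y]` (witnessed by a surjective `k`-algebra map `ψ : D → k[y]` whose kernel is exactly
`xD`), and the subalgebra `R = k + xD` of `D` is not noetherian. -/
theorem xD_twosided_quot_poly_and_k_plus_xD_not_noetherian :
    (∀ d e : DAlg k, (∃ a, d = xD k * a) → (∃ a, d * e = xD k * a) ∧ (∃ a, e * d = xD k * a)) ∧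
    (∃ ψ : DAlg k →ₐ[k] Polynomial k, Function.Surjective ψ ∧
      ∀ d : DAlg k, ψ d = 0 ↔ ∃ a, d = xD k * a) ∧
    (∀ R : Subalgebra k (DAlg k),
      (∀ z, z ∈ R ↔ ∃ (c : k) (a : DAlg k), z = algebraMap k (DAlg k) c + xD k * a) →
      ¬ IsNoetherianRing R) := by
  refine ⟨?_, ?_, ?_⟩
  · rintro d e ⟨a, rfl⟩
    constructor
    · exact ⟨a * e, by rw [mul_assoc]⟩
    · obtain ⟨b, hb⟩ := swap_x k e
      exact ⟨b * a, by rw [← mul_assoc, hb, mul_assoc]⟩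
  · refine ⟨psi k, fun p => ⟨Polynomial.aeval (yD k) p, psi_aeval k p⟩, fun d => ⟨?_, ?_⟩⟩
    · intro hd
      obtain ⟨a, p, rfl⟩ := decomp k d
      rw [map_add, map_mul, psi_x, zero_mul, zero_add, psi_aeval] at hd
      refine ⟨a, ?_⟩
      rw [hd, map_zero, add_zero]
    · rintro ⟨a, rfl⟩
      rw [map_mul, psi_x, zero_mul]
  · intro R hR hNoeth
    haveI : IsNoetherian R R := hNoeth
    set e : ℕ → R := fun j => ⟨xD k * yD k ^ j,
      (hR _).mpr ⟨0, yD k ^ j, by rw [map_zero, zero_add]⟩⟩ with he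
    set f : ℕ →o Submodule R R :=
      ⟨fun n => Submodule.span R (e '' Set.Iic n),
        fun a b hab => Submodule.span_mono (Set.image_mono (Set.Iic_subset_Iic.mpr hab))⟩
      with hf
    obtain ⟨n, hn⟩ := monotone_stabilizes_iff_noetherian.mpr this f
    have hmem : e (n+1) ∈ f n := by
      rw [hn (n+1) (Nat.le_succ n)]
      exact Submodule.subset_span ⟨n+1, Set.mem_Iic.mpr le_rfl, rfl⟩
    rw [hf] at hmem
    change e (n+1) ∈ Submodule.span R (e '' Set.Iic n) at hmem
    rw [Submodule.mem_span_set'] at hmem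
    obtain ⟨m, c, g, hsum⟩ := hmem
    have hval : ((e (n+1) : R) : DAlg k) = ∑ i : Fin m, ((c i : R) : DAlg k) * ((g i : R) : DAlg k) := by
      rw [← hsum]
      push_cast
      rfl
    have h1 : Lf k n ((e (n+1) : R) : DAlg k) = 1 := Lf_top k n
    have h0 : Lf k n ((e (n+1) : R) : DAlg k) = 0 := by
      rw [hval, map_sum]
      refine Finset.sum_eq_zero fun i _ => ?_
      obtain ⟨j, hj, hej⟩ := (g i).2
      obtain ⟨cc, aa, hca⟩ := (hR ((c i : R) : DAlg k)).mp (c i).2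
      rw [hca, ← hej]
      exact Lf_low k n j (Set.mem_Iic.mp hj) cc aa
    rw [h1] at h0
    exact one_ne_zero h0
end
end
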